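/- Let r ≥ 1 and define K = {X ∈ ℝ^{m×n} : ‖X‖_F + ‖X‖_*/√r ≤ 1} and S = conv(⋃_{s ≤ r} {X : rank(X) = s, ‖X‖_F ≤ 1}). Then K ⊆ S; i.e., every matrix X with ‖X‖_F + ‖X‖_*/√r ≤ 1 is a convex combination of matrices of rank at most r and Frobenius norm at most 1. -/

import Mathlib

open scoped BigOperators
open Matrix

noncomputable section

/-- Frobenius (trace) inner product of real matrices. -/
def frobInner {m n : ℕ} (X Y : Matrix (Fin m) (Fin n) ℝ) : ℝ :=
  ∑ i, ∑ j, X i j * Y i j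

/-- Frobenius norm of a real matrix. -/
def frobNorm {m n : ℕ} (X : Matrix (Fin m) (Fin n) ℝ) : ℝ :=
  Real.sqrt (frobInner X X)

/-- Euclidean norm of a vector in ℝ^p. -/
def vecNorm {p : ℕ} (b : Fin p → ℝ) : ℝ :=
  Real.sqrt (∑ i, b i ^ 2)

/-- Nuclear norm: the sum of the singular values of X (square roots of the
eigenvalues of X Xᵀ). -/
def nuclearNorm {m n : ℕ} (X : Matrix (Fin m) (Fin n) ℝ) : ℝ :=
  ∑ i, Real.sqrt ((Matrix.isHermitian_mul_conjTranspose_self X).eigenvalues i)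

namespace KS

variable {m n : ℕ}

def lam (X : Matrix (Fin m) (Fin n) ℝ) (i : Fin m) : ℝ :=
  (Matrix.isHermitian_mul_conjTranspose_self X).eigenvalues i

def uvec (X : Matrix (Fin m) (Fin n) ℝ) (i : Fin m) : Fin m → ℝ :=
  (Matrix.isHermitian_mul_conjTranspose_self X).eigenvectorBasis i

def wvec (X : Matrix (Fin m) (Fin n) ℝ) (i : Fin m) : Fin n → ℝ :=
  fun j => ∑ a, uvec X i a * X a j

def Mi (X : Matrix (Fin m) (Fin n) ℝ) (i : Fin m) : Matrix (Fin m) (Fin n) ℝ :=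
  Matrix.of fun a j => uvec X i a * wvec X i j

lemma lam_nonneg (X : Matrix (Fin m) (Fin n) ℝ) (i : Fin m) : 0 ≤ lam X i :=
  (Matrix.posSemidef_self_mul_conjTranspose X).eigenvalues_nonneg i

lemma nuclearNorm_eq (X : Matrix (Fin m) (Fin n) ℝ) :
    nuclearNorm X = ∑ i, Real.sqrt (lam X i) := rfl

lemma uvec_orth (X : Matrix (Fin m) (Fin n) ℝ) (i k : Fin m) :
    ∑ a, uvec X i a * uvec X k a = if i = k then 1 else 0 := by
  have h := (Matrix.isHermitian_mul_conjTranspose_self X).eigenvectorBasis.orthonormal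
  rw [orthonormal_iff_ite] at h
  have h2 := h i k
  rw [PiLp.inner_apply] at h2
  simpa [uvec, mul_comm] using h2

lemma mulVec_uvec (X : Matrix (Fin m) (Fin n) ℝ) (k : Fin m) :
    (X * Xᴴ) *ᵥ uvec X k = lam X k • uvec X k :=
  (Matrix.isHermitian_mul_conjTranspose_self X).mulVec_eigenvectorBasis k

lemma wvec_orth (X : Matrix (Fin m) (Fin n) ℝ) (i k : Fin m) :
    ∑ j, wvec X i j * wvec X k j = if i = k then lam X k else 0 := by
  have key : ∑ j, wvec X i j * wvec X k j
      = ∑ a, uvec X i a * ((X * Xᴴ) *ᵥ uvec X k) a := by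
    have L : ∑ j, wvec X i j * wvec X k j
        = ∑ a, ∑ b, ∑ j, (uvec X i a * X a j) * (uvec X k b * X b j) := by
      simp only [wvec, Finset.sum_mul_sum]
      rw [Finset.sum_comm]
      exact Finset.sum_congr rfl fun a _ => Finset.sum_comm
    have R : ∑ a, uvec X i a * ((X * Xᴴ) *ᵥ uvec X k) a
        = ∑ a, ∑ b, ∑ j, (uvec X i a * X a j) * (uvec X k b * X b j) := by
      simp only [Matrix.mulVec, dotProduct, Matrix.mul_apply,
        Matrix.conjTranspose_apply, star_trivial, Finset.mul_sum, Finset.sum_mul]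
      exact Finset.sum_congr rfl fun a _ => Finset.sum_congr rfl fun b _ =>
        Finset.sum_congr rfl fun j _ => by ring
    rw [L, R]
  rw [key, mulVec_uvec]
  simp only [Pi.smul_apply, smul_eq_mul]
  rw [show ∑ a, uvec X i a * (lam X k * uvec X k a)
      = lam X k * ∑ a, uvec X i a * uvec X k a by
    rw [Finset.mul_sum]; exact Finset.sum_congr rfl fun a _ => by ring]
  rw [uvec_orth]
  split <;> simp

lemma X_expand (X : Matrix (Fin m) (Fin n) ℝ) : X = ∑ i, Mi X i := by
  ext a j
  have h := (Matrix.isHermitian_mul_conjTranspose_self X).eigenvectorBasis.sum_repr'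
    (WithLp.toLp 2 (fun b => X b j : Fin m → ℝ))
  have h2 := congrFun (congrArg (fun v : EuclideanSpace ℝ (Fin m) => (v : Fin m → ℝ)) h) a
  simp only [PiLp.inner_apply, RCLike.inner_apply, starRingEnd_apply, star_trivial,
    WithLp.ofLp_sum, WithLp.ofLp_smul, WithLp.ofLp_toLp] at h2
  rw [Finset.sum_apply] at h2
  simp only [Matrix.sum_apply, Mi, Matrix.of_apply, wvec, uvec]
  rw [← h2]
  refine Finset.sum_congr rfl fun i _ => ?_
  simp [mul_comm]

lemma frobInner_add_left (A B C : Matrix (Fin m) (Fin n) ℝ) :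
    frobInner (A + B) C = frobInner A C + frobInner B C := by
  simp [frobInner, Matrix.add_apply, add_mul, Finset.sum_add_distrib]

lemma frobInner_add_right (A B C : Matrix (Fin m) (Fin n) ℝ) :
    frobInner A (B + C) = frobInner A B + frobInner A C := by
  simp [frobInner, Matrix.add_apply, mul_add, Finset.sum_add_distrib]

lemma frobInner_zero_left (C : Matrix (Fin m) (Fin n) ℝ) : frobInner 0 C = 0 := by
  simp [frobInner]

lemma frobInner_zero_right (C : Matrix (Fin m) (Fin n) ℝ) : frobInner C 0 = 0 := by
  simp [frobInner]

lemma frobInner_sum_left {ι : Type*} (S : Finset ι) (F : ι → Matrix (Fin m) (Fin n) ℝ)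
    (B : Matrix (Fin m) (Fin n) ℝ) :
    frobInner (∑ s ∈ S, F s) B = ∑ s ∈ S, frobInner (F s) B := by
  classical
  induction S using Finset.induction with
  | empty => simp [frobInner_zero_left]
  | insert _ _ h ih => rw [Finset.sum_insert h, Finset.sum_insert h, frobInner_add_left, ih]

lemma frobInner_sum_right {ι : Type*} (S : Finset ι) (F : ι → Matrix (Fin m) (Fin n) ℝ)
    (B : Matrix (Fin m) (Fin n) ℝ) :
    frobInner B (∑ s ∈ S, F s) = ∑ s ∈ S, frobInner B (F s) := by
  classical
  induction S using Finset.induction with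
  | empty => simp [frobInner_zero_right]
  | insert _ _ h ih => rw [Finset.sum_insert h, Finset.sum_insert h, frobInner_add_right, ih]

lemma frobInner_self_nonneg (A : Matrix (Fin m) (Fin n) ℝ) : 0 ≤ frobInner A A :=
  Finset.sum_nonneg fun _ _ => Finset.sum_nonneg fun _ _ => mul_self_nonneg _

lemma frobNorm_nonneg (A : Matrix (Fin m) (Fin n) ℝ) : 0 ≤ frobNorm A :=
  Real.sqrt_nonneg _

lemma eq_zero_of_frobNorm_eq_zero {A : Matrix (Fin m) (Fin n) ℝ} (h : frobNorm A = 0) :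
    A = 0 := by
  have h1 : frobInner A A = 0 :=
    le_antisymm (Real.sqrt_eq_zero'.mp h) (frobInner_self_nonneg A)
  ext a j
  have h2 := (Finset.sum_eq_zero_iff_of_nonneg
    (fun i _ => Finset.sum_nonneg fun j _ => mul_self_nonneg (A i j))).mp h1 a (Finset.mem_univ a)
  have h3 := (Finset.sum_eq_zero_iff_of_nonneg
    (fun j _ => mul_self_nonneg (A a j))).mp h2 j (Finset.mem_univ j)
  have := mul_self_eq_zero.mp h3
  simpa using this

lemma frobNorm_smul (c : ℝ) (A : Matrix (Fin m) (Fin n) ℝ) :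
    frobNorm (c • A) = |c| * frobNorm A := by
  have h : frobInner (c • A) (c • A) = c ^ 2 * frobInner A A := by
    simp only [frobInner, Matrix.smul_apply, smul_eq_mul, Finset.mul_sum]
    exact Finset.sum_congr rfl fun i _ => Finset.sum_congr rfl fun j _ => by ring
  rw [frobNorm, h, Real.sqrt_mul (sq_nonneg c), Real.sqrt_sq_eq_abs, frobNorm]

lemma frobNorm_zero : frobNorm (0 : Matrix (Fin m) (Fin n) ℝ) = 0 := by
  simp [frobNorm, frobInner_zero_left]

lemma frobInner_Mi (X : Matrix (Fin m) (Fin n) ℝ) (i k : Fin m) :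
    frobInner (Mi X i) (Mi X k) = if i = k then lam X k else 0 := by
  have : frobInner (Mi X i) (Mi X k)
      = (∑ a, uvec X i a * uvec X k a) * (∑ j, wvec X i j * wvec X k j) := by
    rw [Finset.sum_mul_sum]
    exact Finset.sum_congr rfl fun a _ => Finset.sum_congr rfl fun j _ => by
      simp only [Mi, Matrix.of_apply]; ring
  rw [this, uvec_orth, wvec_orth]
  split <;> simp

lemma frob_blockSum (X : Matrix (Fin m) (Fin n) ℝ) (e : Equiv.Perm (Fin m))
    (S : Finset (Fin m)) :
    frobInner (∑ t ∈ S, Mi X (e t)) (∑ t ∈ S, Mi X (e t)) = ∑ t ∈ S, lam X (e t) := by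
  rw [frobInner_sum_left]
  refine Finset.sum_congr rfl fun s hs => ?_
  rw [frobInner_sum_right]
  have : ∀ t ∈ S, frobInner (Mi X (e s)) (Mi X (e t))
      = if t = s then lam X (e s) else 0 := by
    intro t _
    rw [frobInner_Mi]
    by_cases h : t = s
    · simp [h]
    · have : ¬ (e s = e t) := fun hc => h (e.injective hc).symm
      simp [this, h]
  rw [Finset.sum_congr rfl this, Finset.sum_ite_eq' S s (fun _ => lam X (e s))]
  simp [hs]

lemma frobNorm_X_eq (X : Matrix (Fin m) (Fin n) ℝ) :
    frobNorm X = Real.sqrt (∑ i, lam X i) := by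
  have h := frob_blockSum X (Equiv.refl _) Finset.univ
  simp only [Equiv.refl_apply] at h
  rw [← X_expand X] at h
  unfold frobNorm
  rw [h]

lemma rank_blockSum_smul (X : Matrix (Fin m) (Fin n) ℝ) (c : ℝ) (e : Equiv.Perm (Fin m))
    (S : Finset (Fin m)) :
    (c • ∑ t ∈ S, Mi X (e t)).rank ≤ S.card := by
  classical
  set C : Matrix (Fin m) {t // t ∈ S} ℝ := Matrix.of fun a t => c * uvec X (e t.1) a with hC
  set D : Matrix {t // t ∈ S} (Fin n) ℝ := Matrix.of fun t j => wvec X (e t.1) j with hD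
  have hprod : c • ∑ t ∈ S, Mi X (e t) = C * D := by
    ext a j
    simp only [Matrix.smul_apply, Matrix.sum_apply, Mi, Matrix.of_apply, smul_eq_mul,
      Matrix.mul_apply, hC, hD]
    rw [Finset.mul_sum, ← Finset.sum_coe_sort S]
    exact Finset.sum_congr rfl fun t _ => by ring
  rw [hprod]
  refine (Matrix.rank_mul_le_left C D).trans ?_
  refine (Matrix.rank_le_card_width C).trans ?_
  simp [Fintype.card_coe]

end KS
theorem K_subset_S {m n : ℕ} (r : ℕ) (hr : 1 ≤ r) :
    {X : Matrix (Fin m) (Fin n) ℝ | frobNorm X + nuclearNorm X / Real.sqrt r ≤ 1} ⊆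
      convexHull ℝ (⋃ s : ℕ, ⋃ (_ : s ≤ r),
        {X : Matrix (Fin m) (Fin n) ℝ | X.rank = s ∧ frobNorm X ≤ 1}) := by
  classical
  intro X hX
  simp only [Set.mem_setOf_eq] at hX
  set Sset := (⋃ s : ℕ, ⋃ (_ : s ≤ r),
    {X : Matrix (Fin m) (Fin n) ℝ | X.rank = s ∧ frobNorm X ≤ 1}) with hSset
  have hzero : (0 : Matrix (Fin m) (Fin n) ℝ) ∈ Sset := by
    rw [hSset]
    refine Set.mem_iUnion.mpr ⟨0, Set.mem_iUnion.mpr ⟨Nat.zero_le r, ?_⟩⟩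
    exact ⟨Matrix.rank_zero, by rw [KS.frobNorm_zero]; norm_num⟩
  rcases Nat.eq_zero_or_pos m with hm | hm
  · subst hm
    have hX0 : X = 0 := by ext a j; exact a.elim0
    rw [hX0]
    exact subset_convexHull ℝ Sset hzero
  have hr0 : 0 < r := hr
  have hrR : (0:ℝ) < (r:ℝ) := by exact_mod_cast hr0
  have hsqrtr : (0:ℝ) < Real.sqrt r := Real.sqrt_pos.mpr hrR
  -- the sorting permutation
  set e : Equiv.Perm (Fin m) := Fin.revPerm.trans (Tuple.sort (KS.lam X)) with he
  have hmono : ∀ s t : Fin m, s ≤ t → KS.lam X (e t) ≤ KS.lam X (e s) := by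
    intro s t h
    have h2 : Fin.rev t ≤ Fin.rev s := Fin.rev_le_rev.mpr h
    have h3 := Tuple.monotone_sort (KS.lam X) h2
    simpa [he, Function.comp] using h3
  set σ : Fin m → ℝ := fun t => Real.sqrt (KS.lam X (e t)) with hσ
  have hσnn : ∀ t, 0 ≤ σ t := fun t => Real.sqrt_nonneg _
  set B : ℕ → Finset (Fin m) :=
    fun k => Finset.univ.filter (fun t : Fin m => (t : ℕ) / r = k) with hB
  set Y : ℕ → Matrix (Fin m) (Fin n) ℝ := fun k => ∑ t ∈ B k, KS.Mi X (e t) with hY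
  set c : ℕ → ℝ := fun k => frobNorm (Y k) with hc
  set Sig : ℕ → ℝ := fun k => ∑ t ∈ B k, σ t with hSig
  have hc_eq : ∀ k, c k = Real.sqrt (∑ t ∈ B k, KS.lam X (e t)) := by
    intro k
    rw [hc]
    show Real.sqrt (frobInner (Y k) (Y k)) = _
    rw [hY]
    rw [KS.frob_blockSum]
  have hcnn : ∀ k, 0 ≤ c k := fun k => KS.frobNorm_nonneg _
  have hSignn : ∀ k, 0 ≤ Sig k := fun k => Finset.sum_nonneg fun t _ => hσnn t
  have hmapsto : ∀ t : Fin m, t ∈ Finset.univ → (t:ℕ)/r ∈ Finset.range m :=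
    fun t _ => Finset.mem_range.mpr (lt_of_le_of_lt (Nat.div_le_self _ _) t.2)
  have hYsum : ∑ k ∈ Finset.range m, Y k = X := by
    rw [hY, hB]
    rw [Finset.sum_fiberwise_of_maps_to hmapsto (fun t => KS.Mi X (e t))]
    rw [Equiv.sum_comp e (KS.Mi X)]
    exact (KS.X_expand X).symm
  have hSigsum : ∑ k ∈ Finset.range m, Sig k = nuclearNorm X := by
    rw [hSig, hσ, hB]
    rw [Finset.sum_fiberwise_of_maps_to hmapsto (fun t => Real.sqrt (KS.lam X (e t)))]
    rw [Equiv.sum_comp e (fun i => Real.sqrt (KS.lam X i))]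
    exact (KS.nuclearNorm_eq X).symm
  have hBmem : ∀ k, ∀ t ∈ B k, (t:ℕ)/r = k := by
    intro k t ht
    rw [hB] at ht
    exact (Finset.mem_filter.mp ht).2
  have hBcard : ∀ k, (B k).card ≤ r := by
    intro k
    have hmaps : ∀ t ∈ B k, (t:ℕ) - k*r ∈ Finset.range r := by
      intro t ht
      have h1 := hBmem k t ht
      have h2 : (t:ℕ)/r*r + (t:ℕ)%r = (t:ℕ) := Nat.div_add_mod' _ _
      rw [h1] at h2
      have h3 := Nat.mod_lt (t:ℕ) hr0
      refine Finset.mem_range.mpr (by omega)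
    refine Finset.card_le_card_of_injOn (fun t : Fin m => (t:ℕ) - k*r) hmaps ?_ |>.trans ?_
    · intro s hs t ht hst
      have h1 := hBmem k s hs
      have h4 := hBmem k t ht
      have h2 : (s:ℕ)/r*r + (s:ℕ)%r = (s:ℕ) := Nat.div_add_mod' _ _
      rw [h1] at h2
      have h5 : (t:ℕ)/r*r + (t:ℕ)%r = (t:ℕ) := Nat.div_add_mod' _ _
      rw [h4] at h5
      have h3 := Nat.mod_lt (s:ℕ) hr0
      have h6 := Nat.mod_lt (t:ℕ) hr0
      simp only [] at hst
      exact Fin.ext (by omega)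
    · simp
  have hblock : ∀ k, c (k+1) ≤ Sig k / Real.sqrt r := by
    intro k
    rcases Finset.eq_empty_or_nonempty (B (k+1)) with hBe | hBe
    · rw [hc_eq (k+1), hBe]
      simpa using div_nonneg (hSignn k) (Real.sqrt_nonneg _)
    · obtain ⟨t0, ht0⟩ := hBe
      have ht0' : (t0:ℕ)/r = k+1 := hBmem (k+1) t0 ht0
      have hklt : (k+1)*r ≤ (t0:ℕ) :=
        (Nat.le_div_iff_mul_le hr0).mp (le_of_eq ht0'.symm)
      have hcardk : r ≤ (B k).card := by
        have hbig : ∀ i, i < r → k*r + i < m := by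
          intro i hi
          have hring : (k+1)*r = k*r + r := by ring
          omega
        have hmaps : ∀ i ∈ Finset.range r,
            (⟨(k*r + i) % m, Nat.mod_lt _ hm⟩ : Fin m) ∈ B k := by
          intro i hi
          have hi' := Finset.mem_range.mp hi
          have hv : (k*r + i) % m = k*r + i := Nat.mod_eq_of_lt (hbig i hi')
          rw [hB, Finset.mem_filter]
          refine ⟨Finset.mem_univ _, ?_⟩
          show ((k*r + i) % m) / r = k
          rw [hv, show k*r + i = r*k + i by ring, Nat.mul_add_div hr0,
            Nat.div_eq_of_lt hi']
          omega
        have hinj : Set.InjOn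
            (fun i => (⟨(k*r + i) % m, Nat.mod_lt _ hm⟩ : Fin m)) (Finset.range r) := by
          intro i hi j hj hij
          simp only [Finset.coe_range, Set.mem_Iio] at hi hj
          have h1 : (k*r + i) % m = k*r + i := Nat.mod_eq_of_lt (hbig i hi)
          have h2 : (k*r + j) % m = k*r + j := Nat.mod_eq_of_lt (hbig j hj)
          have := congrArg Fin.val hij
          simp only at this
          omega
        simpa using Finset.card_le_card_of_injOn _ hmaps hinj
      have hσbound : ∀ t ∈ B (k+1), σ t ≤ Sig k / r := by
        intro t ht
        have h1 := hBmem (k+1) t ht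
        have hst : ∀ s ∈ B k, σ t ≤ σ s := by
          intro s hs
          have h2 := hBmem k s hs
          have hle : s ≤ t := by
            rw [Fin.le_def]
            by_contra hcon
            push_neg at hcon
            have : (t:ℕ)/r ≤ (s:ℕ)/r := Nat.div_le_div_right (le_of_lt hcon)
            omega
          exact Real.sqrt_le_sqrt (hmono s t hle)
        have hsum : (B k).card • σ t ≤ Sig k := by
          rw [hSig]
          exact Finset.card_nsmul_le_sum (B k) σ (σ t) hst
        have hrs : (r:ℝ) * σ t ≤ Sig k := by
          calc (r:ℝ) * σ t ≤ ((B k).card : ℝ) * σ t := by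
                exact mul_le_mul_of_nonneg_right (by exact_mod_cast hcardk) (hσnn t)
          _ ≤ Sig k := by simpa [nsmul_eq_mul] using hsum
        rw [le_div_iff₀ hrR]
        linarith
      have hsums : ∑ t ∈ B (k+1), KS.lam X (e t) ≤ (Sig k)^2 / r := by
        have h1 : ∑ t ∈ B (k+1), KS.lam X (e t) ≤ (B (k+1)).card • ((Sig k / r)^2) := by
          refine Finset.sum_le_card_nsmul _ _ _ ?_
          intro t ht
          have := hσbound t ht
          have h2 : KS.lam X (e t) = (σ t)^2 := (Real.sq_sqrt (KS.lam_nonneg X (e t))).symm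
          rw [h2]
          exact pow_le_pow_left₀ (hσnn t) this 2
        have h3 : ((B (k+1)).card : ℝ) * ((Sig k / r)^2) ≤ (r:ℝ) * ((Sig k / r)^2) :=
          mul_le_mul_of_nonneg_right (by exact_mod_cast hBcard (k+1)) (sq_nonneg _)
        have h4 : (r:ℝ) * ((Sig k / r)^2) = (Sig k)^2 / r := by
          field_simp
        calc ∑ t ∈ B (k+1), KS.lam X (e t)
            ≤ ((B (k+1)).card : ℝ) * ((Sig k / r)^2) := by simpa [nsmul_eq_mul] using h1
        _ ≤ (r:ℝ) * ((Sig k / r)^2) := h3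
        _ = (Sig k)^2 / r := h4
      rw [hc_eq (k+1)]
      calc Real.sqrt (∑ t ∈ B (k+1), KS.lam X (e t))
          ≤ Real.sqrt ((Sig k)^2 / r) := Real.sqrt_le_sqrt hsums
      _ = Sig k / Real.sqrt r := by
          rw [Real.sqrt_div (sq_nonneg _), Real.sqrt_sq (hSignn k)]
  have htotal : ∑ k ∈ Finset.range m, c k ≤ 1 := by
    obtain ⟨M, rfl⟩ : ∃ M, m = M + 1 := ⟨m-1, by omega⟩
    rw [Finset.sum_range_succ']
    have h0 : c 0 ≤ frobNorm X := by
      rw [hc_eq 0, KS.frobNorm_X_eq]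
      apply Real.sqrt_le_sqrt
      calc ∑ t ∈ B 0, KS.lam X (e t) ≤ ∑ t, KS.lam X (e t) := by
            rw [hB]
            exact Finset.sum_le_sum_of_subset_of_nonneg (Finset.filter_subset _ _)
              (fun t _ _ => KS.lam_nonneg X (e t))
      _ = ∑ i, KS.lam X i := Equiv.sum_comp e (KS.lam X)
    have h1 : ∑ k ∈ Finset.range M, c (k+1) ≤ nuclearNorm X / Real.sqrt r := by
      calc ∑ k ∈ Finset.range M, c (k+1)
          ≤ ∑ k ∈ Finset.range M, Sig k / Real.sqrt r :=
            Finset.sum_le_sum fun k _ => hblock k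
      _ = (∑ k ∈ Finset.range M, Sig k) / Real.sqrt r := by rw [Finset.sum_div]
      _ ≤ (∑ k ∈ Finset.range (M+1), Sig k) / Real.sqrt r := by
            apply (div_le_div_iff_of_pos_right hsqrtr).mpr
            exact Finset.sum_le_sum_of_subset_of_nonneg
              (Finset.range_subset_range.mpr (by omega)) (fun k _ _ => hSignn k)
      _ = nuclearNorm X / Real.sqrt r := by rw [hSigsum]
    linarith
  -- assemble the convex combination
  set P : ℕ → Matrix (Fin m) (Fin n) ℝ :=
    fun k => if c k = 0 then 0 else (c k)⁻¹ • Y k with hP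
  set wt : ℕ → ℝ := fun k => if k = m then 1 - ∑ j ∈ Finset.range m, c j else c k with hwt
  have hwt_sum : ∑ k ∈ Finset.range (m+1), wt k = 1 := by
    rw [Finset.sum_range_succ]
    have heq : ∑ k ∈ Finset.range m, wt k = ∑ k ∈ Finset.range m, c k := by
      refine Finset.sum_congr rfl fun k hk => ?_
      have hne : k ≠ m := by have := Finset.mem_range.mp hk; omega
      simp [hwt, hne]
    rw [heq]
    simp [hwt]
  have hcm : c m = 0 := by
    have hBm : B m = ∅ := by
      refine Finset.eq_empty_of_forall_notMem fun t ht => ?_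
      have h1 := hBmem m t ht
      have h2 := Nat.div_le_self (t:ℕ) r
      have h3 := t.2
      omega
    rw [hc_eq m, hBm]
    simp
  have hYc : ∀ k, c k • P k = Y k := by
    intro k
    by_cases h : c k = 0
    · have hY0 : Y k = 0 := KS.eq_zero_of_frobNorm_eq_zero (by rw [← h, hc])
      simp [hP, h, hY0]
    · simp [hP, h, smul_smul, mul_inv_cancel₀ h]
  have hcenter : X = ∑ k ∈ Finset.range (m+1), wt k • P k := by
    rw [Finset.sum_range_succ]
    have hlast : wt m • P m = 0 := by
      have : P m = 0 := by simp [hP, hcm]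
      simp [this]
    rw [hlast, add_zero]
    have heq : ∀ k ∈ Finset.range m, wt k • P k = Y k := by
      intro k hk
      have hne : k ≠ m := by have := Finset.mem_range.mp hk; omega
      rw [show wt k = c k by simp [hwt, hne], hYc]
    rw [Finset.sum_congr rfl heq, hYsum]
  have hPmem : ∀ k ∈ Finset.range (m+1), P k ∈ Sset := by
    intro k _
    by_cases h : c k = 0
    · simpa [hP, h] using hzero
    · have hPk : P k = (c k)⁻¹ • Y k := by simp [hP, h]
      have hrank : (P k).rank ≤ r := by
        rw [hPk, hY]
        exact (KS.rank_blockSum_smul X (c k)⁻¹ e (B k)).trans (hBcard k)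
      have hfn : frobNorm (P k) ≤ 1 := by
        have h2 : frobNorm (P k) = |(c k)⁻¹| * frobNorm (Y k) := by
          rw [hPk, KS.frobNorm_smul]
        have h3 : frobNorm (Y k) = c k := by rw [hc]
        rw [h2, h3, abs_of_nonneg (inv_nonneg.mpr (hcnn k)), inv_mul_cancel₀ h]
      rw [hSset]
      exact Set.mem_iUnion.mpr ⟨(P k).rank, Set.mem_iUnion.mpr ⟨hrank, ⟨rfl, hfn⟩⟩⟩
  have hwt0 : ∀ k ∈ Finset.range (m+1), 0 ≤ wt k := by
    intro k _
    by_cases h : k = m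
    · simp only [hwt, h, if_pos rfl]
      linarith
    · simp only [hwt, if_neg h]
      exact hcnn k
  have hmem := Finset.centerMass_mem_convexHull (Finset.range (m+1)) hwt0
    (by rw [hwt_sum]; norm_num) hPmem
  rwa [Finset.centerMass_eq_of_sum_1 _ _ hwt_sum, ← hcenter] at hmem
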